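/- Let p ≥ 3 be prime and let α, θ, X ∈ ℚ_p satisfy |α|_p = 1, |1 − α|_p ≤ 1/p, |θ − 1|_p ≤ 1/p and |X|_p < 1 (so |X + 2|_p = 1). Then the polynomial P(x) = x² + (X + θ(1 − α))x − α(X + 1) has two roots x₊, x₋ in ℚ_p satisfying |x₊ − 1|_p ≤ 1/p, |x₋ − 1|_p = 1, |x₋ + 1|_p < 1, and |x₊ − x₋|_p = 1. -/

import Mathlib

open Polynomial

private lemma padic_norm_add_eq_right {p : ℕ} [Fact p.Prime] {a b : ℚ_[p]}
    (h : ‖a‖ < ‖b‖) : ‖a + b‖ = ‖b‖ := by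
  rw [Padic.add_eq_max_of_ne (ne_of_lt h), max_eq_right h.le]

/-- For a prime `p ≥ 3` and `α, θ, X ∈ ℚ_p` with `|α|_p = 1`,
`|1-α|_p ≤ 1/p`, `|θ-1|_p ≤ 1/p`, `|X|_p < 1`, the polynomial
`P(x) = x² + (X + θ(1-α))x - α(X+1)` has two roots `x₊, x₋ ∈ ℚ_p` with
`|x₊ - 1|_p ≤ 1/p`, `|x₋ - 1|_p = 1`, `|x₋ + 1|_p < 1` and `|x₊ - x₋|_p = 1`. -/
theorem potts_first_component_roots (p : ℕ) [Fact p.Prime] (hp : 3 ≤ p)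
    (α θ X : ℚ_[p]) (hα : ‖α‖ = 1) (hα1 : ‖1 - α‖ ≤ 1 / (p : ℝ))
    (hθ : ‖θ - 1‖ ≤ 1 / (p : ℝ)) (hX : ‖X‖ < 1) :
    ∃ xp xm : ℚ_[p],
      xp ^ 2 + (X + θ * (1 - α)) * xp - α * (X + 1) = 0 ∧
      xm ^ 2 + (X + θ * (1 - α)) * xm - α * (X + 1) = 0 ∧
      ‖xp - 1‖ ≤ 1 / (p : ℝ) ∧ ‖xm - 1‖ = 1 ∧ ‖xm + 1‖ < 1 ∧ ‖xp - xm‖ = 1 := by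
  have hp1 : (1 : ℝ) < p := by exact_mod_cast lt_of_lt_of_le (by norm_num) hp
  have hppos : (0 : ℝ) < p := lt_trans one_pos hp1
  have hinvlt : (1 : ℝ) / p < 1 := by rw [div_lt_one hppos]; exact hp1
  have hinvle : (1 : ℝ) / p ≤ 1 := le_of_lt hinvlt
  -- `‖X‖ ≤ 1/p`
  have hX' : ‖X‖ ≤ 1 / (p : ℝ) := by
    have := (Padic.norm_le_pow_iff_norm_lt_pow_add_one X (-1)).2 (by simpa using hX)
    simpa [zpow_neg, one_div] using this
  -- `‖θ‖ = 1`
  have hθ1 : ‖θ‖ = 1 := by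
    have : ‖(θ - 1) + 1‖ = ‖(1 : ℚ_[p])‖ :=
      padic_norm_add_eq_right (by simpa using lt_of_le_of_lt hθ hinvlt)
    simpa using this
  set b : ℚ_[p] := X + θ * (1 - α) with hb_def
  set c : ℚ_[p] := -(α * (X + 1)) with hc_def
  have hb : ‖b‖ ≤ 1 / (p : ℝ) := by
    refine le_trans (Padic.nonarchimedean _ _) (max_le hX' ?_)
    rw [Padic.padicNormE.mul, hθ1, one_mul]; exact hα1
  have hX1 : ‖X + 1‖ ≤ 1 := by
    refine le_trans (Padic.nonarchimedean _ _) (max_le (le_of_lt hX) (by simp))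
  have hc : ‖c‖ ≤ 1 := by
    rw [hc_def, norm_neg, Padic.padicNormE.mul, hα, one_mul]; exact hX1
  set bZ : ℤ_[p] := ⟨b, hb.trans hinvle⟩ with hbZ
  set cZ : ℤ_[p] := ⟨c, hc⟩ with hcZ
  have hbZc : (bZ : ℚ_[p]) = b := rfl
  have hcZc : (cZ : ℚ_[p]) = c := rfl
  set F : Polynomial ℤ_[p] := Polynomial.X ^ 2 + Polynomial.C bZ * Polynomial.X +
    Polynomial.C cZ with hF
  have hFeval : ∀ z : ℤ_[p], F.eval z = z ^ 2 + bZ * z + cZ := by intro z; simp [hF]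
  have hFd : ∀ z : ℤ_[p], F.derivative.eval z = 2 * z + bZ := by
    intro z; simp [hF, derivative_pow]
  -- norm of 2
  have h2 : ‖(2 : ℚ_[p])‖ = 1 := by
    refine le_antisymm (by exact_mod_cast Padic.norm_int_le_one (2 : ℤ)) ?_
    by_contra h
    have h2' : ‖((2 : ℤ) : ℚ_[p])‖ < 1 := by push_cast; exact lt_of_not_ge h
    have := (PadicInt.norm_int_lt_one_iff_dvd (p := p) (2 : ℤ)).1 (by rw [PadicInt.norm_def]; exact_mod_cast h2')
    have hle := Int.le_of_dvd (by norm_num) this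
    omega
  -- derivative at 1 has norm 1
  have hd1 : ‖F.derivative.eval 1‖ = 1 := by
    rw [hFd, PadicInt.norm_def]
    have hcoe : ((2 * 1 + bZ : ℤ_[p]) : ℚ_[p]) = b + 2 := by push_cast [hbZc]; ring_nf; norm_cast
    rw [hcoe, padic_norm_add_eq_right (by rw [h2]; exact lt_of_le_of_lt hb hinvlt), h2]
  -- value at 1 is small
  have hv1 : ‖F.eval 1‖ ≤ 1 / (p : ℝ) := by
    rw [hFeval, PadicInt.norm_def]
    have hcoe : ((1 ^ 2 + bZ * 1 + cZ : ℤ_[p]) : ℚ_[p]) = (1 - α) * (1 + X + θ) := by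
      push_cast [hbZc, hcZc, hb_def, hc_def]; ring
    rw [hcoe, Padic.padicNormE.mul]
    have h1Xθ : ‖1 + X + θ‖ ≤ 1 := by
      refine le_trans (Padic.nonarchimedean _ _) (max_le ?_ (le_of_eq hθ1))
      exact le_trans (Padic.nonarchimedean _ _) (max_le (by simp) (le_of_lt hX))
    calc ‖1 - α‖ * ‖1 + X + θ‖ ≤ (1 / p) * 1 := by
          exact mul_le_mul hα1 h1Xθ (norm_nonneg _) (by positivity)
      _ = 1 / p := mul_one _
  -- Hensel
  have hcond : ‖F.eval 1‖ < ‖F.derivative.eval 1‖ ^ 2 := by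
    rw [hd1]; norm_num; exact lt_of_le_of_lt hv1 hinvlt
  obtain ⟨z, hz, hz1, -, -⟩ := hensels_lemma hcond
  rw [Polynomial.coe_aeval_eq_eval, hd1] at hz1
  rw [Polynomial.coe_aeval_eq_eval] at hz
  -- `‖z - 1‖ ≤ 1/p`
  obtain ⟨w, hw⟩ := (PadicInt.norm_lt_one_iff_dvd _).1 hz1
  have hz1' : ‖z - 1‖ ≤ 1 / (p : ℝ) := by
    rw [hw, norm_mul, PadicInt.norm_p, one_div]
    exact mul_le_of_le_one_right (by positivity) (PadicInt.norm_le_one w)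
  refine ⟨(z : ℚ_[p]), -(b + (z : ℚ_[p])), ?_, ?_, ?_, ?_, ?_, ?_⟩
  · -- xp is a root
    have := hFeval z ▸ hz
    have hcoe : ((z ^ 2 + bZ * z + cZ : ℤ_[p]) : ℚ_[p]) = 0 := by rw [this]; simp
    push_cast [hbZc, hcZc, hc_def] at hcoe
    rw [hb_def] at hcoe ⊢
    linear_combination hcoe
  · -- xm is a root
    have := hFeval z ▸ hz
    have hcoe : ((z ^ 2 + bZ * z + cZ : ℤ_[p]) : ℚ_[p]) = 0 := by rw [this]; simp
    push_cast [hbZc, hcZc, hc_def] at hcoe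
    rw [hb_def] at hcoe ⊢
    linear_combination hcoe
  · -- ‖xp - 1‖ ≤ 1/p
    have : ((z : ℚ_[p]) - 1) = ((z - 1 : ℤ_[p]) : ℚ_[p]) := by push_cast; ring
    rw [this, ← PadicInt.norm_def]; exact hz1'
  · -- ‖xm - 1‖ = 1
    have hsmall : ‖-(b + (z : ℚ_[p])) + 1‖ ≤ 1 / (p : ℝ) := by
      have heq : -(b + (z : ℚ_[p])) + 1 = -(b + ((z : ℚ_[p]) - 1)) := by ring
      rw [heq, norm_neg]
      refine le_trans (Padic.nonarchimedean _ _) (max_le hb ?_)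
      have : ((z : ℚ_[p]) - 1) = ((z - 1 : ℤ_[p]) : ℚ_[p]) := by push_cast; ring
      rw [this, ← PadicInt.norm_def]; exact hz1'
    have heq2 : -(b + (z : ℚ_[p])) - 1 = (-(b + (z : ℚ_[p])) + 1) + (-2) := by ring
    rw [heq2, padic_norm_add_eq_right, norm_neg, h2]
    rw [norm_neg, h2]
    exact lt_of_le_of_lt hsmall hinvlt
  · -- ‖xm + 1‖ < 1
    have heq : -(b + (z : ℚ_[p])) + 1 = -(b + ((z : ℚ_[p]) - 1)) := by ring
    rw [heq, norm_neg]
    refine lt_of_le_of_lt (le_trans (Padic.nonarchimedean _ _) (max_le hb ?_)) hinvlt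
    have : ((z : ℚ_[p]) - 1) = ((z - 1 : ℤ_[p]) : ℚ_[p]) := by push_cast; ring
    rw [this, ← PadicInt.norm_def]; exact hz1'
  · -- ‖xp - xm‖ = 1
    have hxm1 : ‖-(b + (z : ℚ_[p])) - 1‖ = 1 := by
      have hsmall : ‖-(b + (z : ℚ_[p])) + 1‖ ≤ 1 / (p : ℝ) := by
        have heq : -(b + (z : ℚ_[p])) + 1 = -(b + ((z : ℚ_[p]) - 1)) := by ring
        rw [heq, norm_neg]
        refine le_trans (Padic.nonarchimedean _ _) (max_le hb ?_)
        have : ((z : ℚ_[p]) - 1) = ((z - 1 : ℤ_[p]) : ℚ_[p]) := by push_cast; ring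
        rw [this, ← PadicInt.norm_def]; exact hz1'
      have heq2 : -(b + (z : ℚ_[p])) - 1 = (-(b + (z : ℚ_[p])) + 1) + (-2) := by ring
      rw [heq2, padic_norm_add_eq_right, norm_neg, h2]
      rw [norm_neg, h2]
      exact lt_of_le_of_lt hsmall hinvlt
    have heq3 : (z : ℚ_[p]) - -(b + (z : ℚ_[p])) =
        ((z : ℚ_[p]) - 1) + -((-(b + (z : ℚ_[p]))) - 1) := by ring
    rw [heq3, padic_norm_add_eq_right, norm_neg, hxm1]
    rw [norm_neg, hxm1]
    have : ((z : ℚ_[p]) - 1) = ((z - 1 : ℤ_[p]) : ℚ_[p]) := by push_cast; ring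
    rw [this, ← PadicInt.norm_def]
    exact lt_of_le_of_lt hz1' hinvlt
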